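/- Let δ : D → C be a split monomorphism (cosplitting in M) which is a coalgebra homomorphism in an abelian monoidal category M. Then D ∧_C D = Δ_C^{-1}(D ⊗ C + C ⊗ D), i.e. the wedge square of D in C equals the preimage under the comultiplication of the subobject (D ⊗ C) + (C ⊗ D) of C ⊗ C. -/

import Mathlib

open CategoryTheory CategoryTheory.Limits MonoidalCategory

universe v u

variable {M : Type u} [Category.{v} M] [MonoidalCategory M] [Abelian M]

lemma pullback_obj_mk_aux {X Y A : M} (f : X ⟶ Y) (h : A ⟶ Y) [Mono h] :
    (Subobject.pullback f).obj (Subobject.mk h) = Subobject.mk (pullback.snd h f) := by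
  rfl

lemma pullback_obj_kernelSubobject_aux {X Y Z : M} (f : X ⟶ Y) (g : Y ⟶ Z) :
    (Subobject.pullback f).obj (kernelSubobject g) = kernelSubobject (f ≫ g) := by
  rw [show kernelSubobject g = Subobject.mk (kernel.ι g) from rfl,
    pullback_obj_mk_aux]
  apply le_antisymm
  · refine Subobject.mk_le_mk_of_comm
      (kernel.lift (f ≫ g) (pullback.snd (kernel.ι g) f) ?_) (kernel.lift_ι _ _ _)
    rw [← Category.assoc, ← pullback.condition, Category.assoc, kernel.condition, comp_zero]
  · refine Subobject.mk_le_mk_of_comm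
      (pullback.lift (kernel.lift g (kernel.ι (f ≫ g) ≫ f) (by
        rw [Category.assoc, ← kernel.condition (f ≫ g)])) (kernel.ι (f ≫ g)) (by simp)) (pullback.lift_snd _ _ _)

theorem stmt8
    [∀ X : M, PreservesFiniteLimits (tensorLeft X)]
    [∀ X : M, PreservesFiniteLimits (tensorRight X)]
    (D C : Comon M) (δ : D ⟶ C) (r : C.X ⟶ D.X) (hr : δ.hom ≫ r = 𝟙 D.X) :
    kernelSubobject (C.comon.comul ≫ (cokernel.π δ.hom ⊗ₘ cokernel.π δ.hom))
      = (Subobject.pullback C.comon.comul).obj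
          (imageSubobject (biprod.desc (δ.hom ▷ C.X) (C.X ◁ δ.hom))) := by
  haveI : (tensorLeft C.X).Additive := Functor.additive_of_preserves_binary_products _
  haveI : (tensorRight C.X).Additive := Functor.additive_of_preserves_binary_products _
  set p := cokernel.π δ.hom with hp
  have key : imageSubobject (biprod.desc (δ.hom ▷ C.X) (C.X ◁ δ.hom))
      = kernelSubobject (p ⊗ₘ p) := by
    apply le_antisymm
    · apply le_kernelSubobject
      apply imageSubobject_arrow_comp_eq_zero
      apply biprod.hom_ext' <;> simp only [biprod.inl_desc_assoc, biprod.inr_desc_assoc, comp_zero]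
      · rw [MonoidalCategory.tensorHom_def, ← comp_whiskerRight_assoc, cokernel.condition,
          show (0 : D.X ⟶ cokernel δ.hom) ▷ C.X = (tensorRight C.X).map 0 from rfl,
          Functor.map_zero, zero_comp]
      · rw [tensorHom_def', ← MonoidalCategory.whiskerLeft_comp_assoc, cokernel.condition,
          show C.X ◁ (0 : D.X ⟶ cokernel δ.hom) = (tensorLeft C.X).map 0 from rfl,
          Functor.map_zero, zero_comp]
    · -- kernel ≤ image
      have h0 : δ.hom ≫ (𝟙 C.X - r ≫ δ.hom) = 0 := by
        rw [Preadditive.comp_sub, Category.comp_id, ← Category.assoc, hr, Category.id_comp, sub_self]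
      set t : cokernel δ.hom ⟶ C.X := cokernel.desc δ.hom (𝟙 C.X - r ≫ δ.hom) h0 with hT
      have ht : p ≫ t = 𝟙 C.X - r ≫ δ.hom := cokernel.π_desc _ _ _
      set k := (kernelSubobject (p ⊗ₘ p)).arrow with hk
      have hk0 : k ≫ (p ⊗ₘ p) = 0 := kernelSubobject_arrow_comp _
      set u : (kernelSubobject (p ⊗ₘ p) : M) ⟶ C.X ⊗ C.X := k ≫ p ▷ C.X ≫ t ▷ C.X with hu
      have hu0 : u ≫ C.X ◁ p = 0 := by
        rw [hu, Category.assoc, Category.assoc, ← whisker_exchange,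
          ← Category.assoc (p ▷ C.X), ← MonoidalCategory.tensorHom_def, ← Category.assoc, hk0, zero_comp]
      -- decompose k
      have addR : ∀ {A : M} (a b : A ⟶ C.X), (a + b) ▷ C.X = a ▷ C.X + b ▷ C.X := by
        intro A a b
        rw [show (a + b) ▷ C.X = (tensorRight C.X).map (a + b) from rfl, Functor.map_add]; rfl
      have addL : ∀ {A : M} (a b : A ⟶ C.X), C.X ◁ (a + b) = C.X ◁ a + C.X ◁ b := by
        intro A a b
        rw [show C.X ◁ (a + b) = (tensorLeft C.X).map (a + b) from rfl, Functor.map_add]; rfl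
      have idC : (r ≫ δ.hom) + (p ≫ t) = 𝟙 C.X := by rw [ht]; abel
      have hk_dec : k = k ≫ (r ≫ δ.hom) ▷ C.X + u := by
        have : k ≫ ((r ≫ δ.hom) + (p ≫ t)) ▷ C.X = k := by
          rw [idC, MonoidalCategory.id_whiskerRight, Category.comp_id]
        conv_lhs => rw [← this]
        rw [addR, Preadditive.comp_add]
        simp [hu, comp_whiskerRight]
      have hu_dec : u = (u ≫ C.X ◁ r) ≫ C.X ◁ δ.hom := by
        have : u ≫ C.X ◁ ((r ≫ δ.hom) + (p ≫ t)) = u := by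
          rw [idC, MonoidalCategory.whiskerLeft_id, Category.comp_id]
        conv_lhs => rw [← this]
        rw [addL, Preadditive.comp_add, MonoidalCategory.whiskerLeft_comp,
          MonoidalCategory.whiskerLeft_comp, ← Category.assoc, ← Category.assoc,
          hu0, zero_comp, add_zero]
      have hfac : (biprod.lift (k ≫ r ▷ C.X) (u ≫ C.X ◁ r)) ≫
          biprod.desc (δ.hom ▷ C.X) (C.X ◁ δ.hom) = k := by
        rw [biprod.lift_desc, Category.assoc, ← comp_whiskerRight, ← hu_dec, ← hk_dec]
      refine Subobject.le_mk_of_comm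
        (biprod.lift (k ≫ r ▷ C.X) (u ≫ C.X ◁ r) ≫
          factorThruImage (biprod.desc (δ.hom ▷ C.X) (C.X ◁ δ.hom))) ?_
      rw [Category.assoc, image.fac, hfac]
  rw [key, pullback_obj_kernelSubobject_aux]
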